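/- Let F be a field of characteristic zero, let X be an n-element set, let G be a subgroup of the symmetric group Sym(X), and let w_1,...,w_m be indeterminates with w̃ = (∑_{i=1}^m w_i, ∑_{i=1}^m w_i^2, ..., ∑_{i=1}^m w_i^n). Let Δ : G → F be any function. Then ∑_{k∈P_m([n])} ( ∑_{α∈k(X)} ∑_{σ∈Sym(α)∩G} Δ(σ) ) · w^{(k)} = ∑_{σ∈G} Δ(σ) · Z(σ, w̃), where the equality holds in F[w_1,...,w_m]. -/

import Mathlib

open Finset

open scoped Classical

noncomputable section

/-- `cycleCount σ i` is the number of cycles of length `i` in the cycle decomposition of the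
permutation `σ` (fixed points are counted as cycles of length `1`). -/
def cycleCount {X : Type*} [Fintype X] [DecidableEq X] (σ : Equiv.Perm X) (i : ℕ) : ℕ :=
  if i = 1 then Fintype.card X - σ.support.card else σ.cycleType.count i

/-- `Zmon n σ t = t₁^{c₁(σ)} ⋯ t_n^{c_n(σ)}`, the monomial of the cycle index polynomial
associated to `σ`, evaluated at `t = (t₁, …, t_n)`. -/
def Zmon {X : Type*} [Fintype X] [DecidableEq X] {R : Type*} [CommSemiring R] (n : ℕ)
    (σ : Equiv.Perm X) (t : Fin n → R) : R :=
  ∏ i : Fin n, t i ^ cycleCount σ (i.1 + 1)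

set_option linter.unusedSectionVars false

namespace PolyaAux

variable {X : Type*} [Fintype X] [DecidableEq X]

/-- The setoid on `X` whose classes are the cycles (orbits) of `σ`. -/
def pSetoid (σ : Equiv.Perm X) : Setoid X :=
  ⟨σ.SameCycle, ⟨fun x => Equiv.Perm.SameCycle.refl σ x,
    Equiv.Perm.SameCycle.symm, Equiv.Perm.SameCycle.trans⟩⟩

abbrev Q (σ : Equiv.Perm X) := Quotient (pSetoid σ)

def qmk (σ : Equiv.Perm X) (x : X) : Q σ := Quotient.mk (pSetoid σ) x

lemma qmk_eq_qmk {σ : Equiv.Perm X} {x y : X} : qmk σ x = qmk σ y ↔ σ.SameCycle x y :=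
  ⟨Quotient.exact, fun h => by exact Quotient.sound h⟩

lemma qmk_out (σ : Equiv.Perm X) (q : Q σ) : qmk σ q.out = q := Quotient.out_eq q

lemma qmk_apply (σ : Equiv.Perm X) (x : X) : qmk σ (σ x) = qmk σ x :=
  Quotient.sound (show σ.SameCycle (σ x) x from ⟨-1, by simp⟩)

/-- Size of a class of the setoid. -/
def sz (σ : Equiv.Perm X) (q : Q σ) : ℕ := (univ.filter fun x => qmk σ x = q).card

lemma one_le_sz (σ : Equiv.Perm X) (q : Q σ) : 1 ≤ sz σ q := by
  rw [Nat.one_le_iff_ne_zero, sz, ← Nat.pos_iff_ne_zero, card_pos]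
  exact ⟨q.out, by simp [qmk_out]⟩

lemma sz_le (σ : Equiv.Perm X) (q : Q σ) : sz σ q ≤ Fintype.card X :=
  (card_filter_le _ _).trans (by simp)

/-- A function invariant under `σ` is constant on cycles. -/
lemma eq_of_sameCycle {σ : Equiv.Perm X} {β : Sort*} {f : X → β}
    (hf : ∀ x, f (σ x) = f x) {x y : X} (h : σ.SameCycle x y) : f x = f y := by
  have H : ∀ (k : ℤ) (x : X), f ((σ ^ k) x) = f x := by
    intro k
    induction k using Int.induction_on with
    | zero => simp
    | succ k ih =>
        intro x
        rw [zpow_add_one, Equiv.Perm.mul_apply, ih, hf]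
    | pred k ih =>
        intro x
        rw [zpow_sub_one, Equiv.Perm.mul_apply, ih]
        have := hf (σ⁻¹ x)
        rw [← Equiv.Perm.mul_apply, mul_inv_cancel, Equiv.Perm.one_apply] at this
        exact this.symm
  obtain ⟨i, rfl⟩ := h
  exact (H i x).symm

/-- A `σ`-invariant finset is a union of cycles. -/
lemma mem_iff_of_sameCycle {σ : Equiv.Perm X} {A : Finset X}
    (hA : ∀ x ∈ A, σ x ∈ A) {x y : X} (h : σ.SameCycle x y) : x ∈ A ↔ y ∈ A := by
  have himg : A.image σ = A := by
    apply eq_of_subset_of_card_le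
    · intro z hz
      obtain ⟨u, hu, rfl⟩ := mem_image.1 hz
      exact hA u hu
    · rw [card_image_of_injective _ σ.injective]
  have hback : ∀ z, σ z ∈ A → z ∈ A := by
    intro z hz
    rw [← himg] at hz
    obtain ⟨u, hu, huz⟩ := mem_image.1 hz
    rwa [← σ.injective huz]
  have hf : ∀ z, ((σ z ∈ A) : Prop) = (z ∈ A) :=
    fun z => propext ⟨hback z, hA z⟩
  exact iff_of_eq (eq_of_sameCycle hf h)

lemma sz_eq_one_iff {σ : Equiv.Perm X} (x : X) : sz σ (qmk σ x) = 1 ↔ σ x = x := by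
  constructor
  · intro h
    by_contra hne
    have h1 : x ∈ univ.filter fun y => qmk σ y = qmk σ x := by simp
    have h2 : σ x ∈ univ.filter fun y => qmk σ y = qmk σ x := by simp [qmk_apply]
    have hcard : 1 < sz σ (qmk σ x) :=
      Finset.one_lt_card.2 ⟨σ x, h2, x, h1, hne⟩
    omega
  · intro hfix
    have : (univ.filter fun y => qmk σ y = qmk σ x) = {x} := by
      ext y
      simp only [mem_filter, mem_univ, true_and, mem_singleton, qmk_eq_qmk]
      constructor
      · intro h
        obtain ⟨i, hi⟩ := h.symm
        rw [← hi, Equiv.Perm.zpow_apply_eq_self_of_apply_eq_self hfix i]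
      · rintro rfl; exact Equiv.Perm.SameCycle.refl σ _
    rw [sz, this, card_singleton]

lemma mem_support_of_sz_ne_one {σ : Equiv.Perm X} {q : Q σ} (h : sz σ q ≠ 1) :
    q.out ∈ σ.support := by
  rw [Equiv.Perm.mem_support]
  intro hfix
  exact h ((qmk_out σ q) ▸ (sz_eq_one_iff q.out).2 hfix)

lemma support_cycleOf_eq_class {σ : Equiv.Perm X} {x : X} (hx : x ∈ σ.support) :
    (σ.cycleOf x).support = univ.filter fun y => qmk σ y = qmk σ x := by
  ext y
  simp only [Equiv.Perm.mem_support_cycleOf_iff, mem_filter, mem_univ, true_and, qmk_eq_qmk]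
  constructor
  · rintro ⟨h, -⟩; exact h.symm
  · intro h; exact ⟨h.symm, hx⟩

lemma sz_qmk_of_mem_support {σ : Equiv.Perm X} {x : X} (hx : x ∈ σ.support) :
    sz σ (qmk σ x) = (σ.cycleOf x).support.card := by
  rw [sz, support_cycleOf_eq_class hx]

lemma card_sz_eq_of_two_le {σ : Equiv.Perm X} {j : ℕ} (hj : 2 ≤ j) :
    (univ.filter fun q : Q σ => sz σ q = j).card = σ.cycleType.count j := by
  have hct : σ.cycleType.count j
      = (σ.cycleFactorsFinset.filter fun c => j = c.support.card).card := by
    rw [Equiv.Perm.cycleType_def, Multiset.count_map]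
    rfl
  rw [hct]
  apply card_bij (fun q _ => σ.cycleOf q.out)
  · intro q hq
    rw [mem_filter] at hq ⊢
    have hsupp : q.out ∈ σ.support := mem_support_of_sz_ne_one (by omega)
    refine ⟨Equiv.Perm.cycleOf_mem_cycleFactorsFinset_iff.2 hsupp, ?_⟩
    rw [← sz_qmk_of_mem_support hsupp, qmk_out]
    exact hq.2.symm
  · intro q1 h1 q2 h2 heq
    rw [mem_filter] at h1 h2
    have hs1 : q1.out ∈ σ.support := mem_support_of_sz_ne_one (by omega)
    have hs2 : q2.out ∈ σ.support := mem_support_of_sz_ne_one (by omega)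
    have : q2.out ∈ (σ.cycleOf q1.out).support := by
      rw [heq]
      exact Equiv.Perm.mem_support_cycleOf_iff.2 ⟨Equiv.Perm.SameCycle.refl σ _, hs2⟩
    have hsc : σ.SameCycle q1.out q2.out :=
      (Equiv.Perm.mem_support_cycleOf_iff.1 this).1
    rw [← qmk_out σ q1, ← qmk_out σ q2]
    exact qmk_eq_qmk.2 hsc
  · intro c hc
    rw [mem_filter] at hc
    obtain ⟨hc1, hc2⟩ := hc
    have hne : c.support.Nonempty := card_pos.1 (by omega)
    obtain ⟨x, hx⟩ := hne
    have hcx : c = σ.cycleOf x := Equiv.Perm.cycle_is_cycleOf hx hc1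
    have hxs : x ∈ σ.support := by
      rw [Equiv.Perm.mem_support]
      have := Equiv.Perm.mem_support.1 hx
      rwa [hcx, Equiv.Perm.cycleOf_apply_self] at this
    refine ⟨qmk σ x, ?_, ?_⟩
    · rw [mem_filter]
      refine ⟨mem_univ _, ?_⟩
      rw [sz_qmk_of_mem_support hxs, ← hcx, hc2]
    · have hsame : σ.SameCycle (qmk σ x).out x := qmk_eq_qmk.1 (qmk_out σ (qmk σ x))
      rw [Equiv.Perm.SameCycle.cycleOf_eq hsame, ← hcx]

lemma card_sz_eq_one (σ : Equiv.Perm X) :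
    (univ.filter fun q : Q σ => sz σ q = 1).card = Fintype.card X - σ.support.card := by
  rw [← Finset.card_compl σ.support]
  apply card_bij (fun (q : Q σ) _ => q.out)
  · intro q hq
    rw [mem_filter] at hq
    rw [mem_compl, Equiv.Perm.mem_support, not_not]
    exact (sz_eq_one_iff q.out).1 (by rw [qmk_out]; exact hq.2)
  · intro q1 h1 q2 h2 h
    rw [← qmk_out σ q1, ← qmk_out σ q2, h]
  · intro x hx
    rw [mem_compl, Equiv.Perm.mem_support, not_not] at hx
    refine ⟨qmk σ x, ?_, ?_⟩
    · rw [mem_filter]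
      exact ⟨mem_univ _, (sz_eq_one_iff x).2 hx⟩
    · obtain ⟨i, hi⟩ := (qmk_eq_qmk.1 (qmk_out σ (qmk σ x))).symm
      rw [← hi, Equiv.Perm.zpow_apply_eq_self_of_apply_eq_self hx i]

lemma card_sz_eq (σ : Equiv.Perm X) (j : ℕ) :
    (univ.filter fun q : Q σ => sz σ q = j + 1).card = cycleCount σ (j + 1) := by
  rcases Nat.eq_zero_or_pos j with rfl | hj
  · rw [cycleCount, if_pos rfl]
    exact card_sz_eq_one σ
  · rw [cycleCount, if_neg (by omega)]
    exact card_sz_eq_of_two_le (by omega)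

/-- The ordered partition associated to a coloring of the cycles. -/
def blk (σ : Equiv.Perm X) {m : ℕ} (f : Q σ → Fin m) (i : Fin m) : Finset X :=
  univ.filter fun x => f (qmk σ x) = i

lemma prod_blk (σ : Equiv.Perm X) {m : ℕ} {R : Type*} [CommSemiring R]
    (w : Fin m → R) (f : Q σ → Fin m) :
    ∏ i, w i ^ (blk σ f i).card = ∏ q : Q σ, w (f q) ^ sz σ q := by
  have h1 : ∏ x : X, w (f (qmk σ x)) = ∏ i, w i ^ (blk σ f i).card := by
    rw [← prod_fiberwise_of_maps_to' (g := fun x => f (qmk σ x)) (fun x _ => mem_univ _) w]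
    exact prod_congr rfl fun i _ => prod_const _
  have h2 : ∏ x : X, w (f (qmk σ x)) = ∏ q : Q σ, w (f q) ^ sz σ q := by
    rw [← prod_fiberwise_of_maps_to' (g := fun x => qmk σ x) (fun x _ => mem_univ _)
      (fun q => w (f q))]
    exact prod_congr rfl fun q _ => prod_const _
  rw [← h1, h2]

lemma per_sigma {R : Type*} [CommSemiring R] (σ : Equiv.Perm X) (m : ℕ) (w : Fin m → R) :
    ∑ A ∈ univ.filter (fun A : Fin m → Finset X =>
        ((∀ i j, i ≠ j → Disjoint (A i) (A j)) ∧ ∑ i, (A i).card = Fintype.card X)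
          ∧ ∀ i, ∀ x ∈ A i, σ x ∈ A i),
      ∏ i, w i ^ (A i).card
      = Zmon (Fintype.card X) σ (fun j => ∑ i, w i ^ (j.1 + 1)) := by
  have stepA : ∑ A ∈ univ.filter (fun A : Fin m → Finset X =>
        ((∀ i j, i ≠ j → Disjoint (A i) (A j)) ∧ ∑ i, (A i).card = Fintype.card X)
          ∧ ∀ i, ∀ x ∈ A i, σ x ∈ A i),
      ∏ i, w i ^ (A i).card = ∑ f : Q σ → Fin m, ∏ q : Q σ, w (f q) ^ sz σ q := by
    symm
    apply sum_nbij (i := blk σ)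
    · intro f _
      rw [mem_filter]
      refine ⟨mem_univ _, ⟨⟨?_, ?_⟩, ?_⟩⟩
      · intro i j hij
        rw [Finset.disjoint_left]
        intro x hx hx'
        simp only [blk, mem_filter, mem_univ, true_and] at hx hx'
        exact hij (hx ▸ hx')
      · rw [← Finset.card_univ]
        exact (card_eq_sum_card_fiberwise (f := fun x => f (qmk σ x))
          (fun x _ => mem_univ _)).symm
      · intro i x hx
        simp only [blk, mem_filter, mem_univ, true_and] at hx ⊢
        rw [qmk_apply]
        exact hx
    · intro f _ g _ h
      funext q
      have hq : q.out ∈ blk σ f (f q) := by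
        simp only [blk, mem_filter, mem_univ, true_and, qmk_out]
      rw [h] at hq
      simp only [blk, mem_filter, mem_univ, true_and, qmk_out] at hq
      exact hq.symm
    · intro A hA
      obtain ⟨⟨hdisj, hsum⟩, hstab⟩ := (mem_filter.1 (mem_coe.1 hA)).2
      have hcov : ∀ x : X, ∃ i, x ∈ A i := by
        have hbU : (univ.biUnion A) = univ := by
          apply eq_of_subset_of_card_le (subset_univ _)
          rw [card_univ, card_biUnion (fun i _ j _ hij => hdisj i j hij), hsum]
        intro x
        have hx : x ∈ univ.biUnion A := hbU.symm ▸ mem_univ x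
        obtain ⟨i, _, hi⟩ := mem_biUnion.1 hx
        exact ⟨i, hi⟩
      choose g hg using hcov
      have hginv : ∀ x, g (σ x) = g x := by
        intro x
        by_contra hne
        exact Finset.disjoint_left.1 (hdisj _ _ hne) (hg (σ x)) (hstab _ x (hg x))
      refine ⟨Quotient.lift g (fun a b hab => eq_of_sameCycle hginv hab),
        mem_coe.2 (mem_univ _), ?_⟩
      funext i
      ext x
      simp only [blk, mem_filter, mem_univ, true_and]
      show g x = i ↔ x ∈ A i
      constructor
      · rintro rfl; exact hg x
      · intro hx
        by_contra hne
        exact Finset.disjoint_left.1 (hdisj _ _ hne) (hg x) hx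
    · intro f _
      exact (prod_blk σ w f).symm
  rw [stepA]
  have stepB : ∑ f : Q σ → Fin m, ∏ q : Q σ, w (f q) ^ sz σ q
      = ∏ q : Q σ, (∑ i, w i ^ sz σ q) := by
    rw [Finset.prod_univ_sum (fun _ => (univ : Finset (Fin m))) (fun q i => w i ^ sz σ q),
      Fintype.piFinset_univ]
  rw [stepB]
  set n' := Fintype.card X with hn'
  have hszlt : ∀ q : Q σ, sz σ q - 1 < n' := fun q =>
    lt_of_lt_of_le (Nat.sub_lt (one_le_sz σ q) one_pos) (sz_le σ q)
  have hLHS : ∏ q : Q σ, (∑ i, w i ^ sz σ q)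
      = ∏ q : Q σ, (fun j : Fin n' => ∑ i, w i ^ (j.1 + 1)) ⟨sz σ q - 1, hszlt q⟩ := by
    apply prod_congr rfl
    intro q _
    simp only
    have h1 : sz σ q - 1 + 1 = sz σ q := Nat.succ_pred_eq_of_pos (one_le_sz σ q)
    rw [h1]
  rw [hLHS, Zmon,
    ← prod_fiberwise_of_maps_to' (t := (univ : Finset (Fin n')))
      (g := fun q : Q σ => (⟨sz σ q - 1, hszlt q⟩ : Fin n')) (fun q _ => mem_univ _)
      (fun j : Fin n' => ∑ i, w i ^ (j.1 + 1))]
  apply prod_congr rfl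
  intro j _
  rw [prod_const]
  congr 1
  rw [← card_sz_eq σ j.1]
  congr 1
  ext q
  simp only [mem_filter, mem_univ, true_and, Fin.ext_iff]
  have h1 := one_le_sz σ q
  omega

end PolyaAux

/-- **Extended Pólya Enumeration Theorem, partition formulation.**
`∑_{k ∈ P_m([n])} (∑_{α ∈ k(X)} ∑_{σ ∈ Sym(α) ∩ G} Δ(σ)) · w^{(k)}
  = ∑_{σ ∈ G} Δ(σ) · Z(σ, w̃)` in `F[w₁, …, w_m]`, where `k(X)` is the set of tuples
`(A₁, …, A_m)` of pairwise disjoint subsets of `X` with `|Aᵢ| = kᵢ`, and `Sym(α)` is the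
subgroup of permutations stabilizing each block `Aᵢ` setwise. -/
theorem extended_polya_partitions {F : Type*} [Field F] [CharZero F] (n m : ℕ)
    (X : Type*) [Fintype X] [DecidableEq X] (hX : Fintype.card X = n)
    (G : Subgroup (Equiv.Perm X)) (Δ : G → F) :
    ∑ k ∈ Finset.Nat.antidiagonalTuple m n,
      (MvPolynomial.C
          (∑ A ∈ univ.filter (fun A : Fin m → Finset X =>
              (∀ i, (A i).card = k i) ∧ ∀ i j, i ≠ j → Disjoint (A i) (A j)),
            ∑ σ ∈ univ.filter (fun σ : G => ∀ i, ∀ x ∈ A i, (σ : Equiv.Perm X) x ∈ A i), Δ σ))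
        * ∏ i, (MvPolynomial.X i : MvPolynomial (Fin m) F) ^ k i
      = ∑ σ : G,
          MvPolynomial.C (Δ σ) *
            Zmon n (σ : Equiv.Perm X)
              (fun j => ∑ i : Fin m, (MvPolynomial.X i : MvPolynomial (Fin m) F) ^ (j.1 + 1)) := by
  subst hX
  have step1 : ∑ k ∈ Finset.Nat.antidiagonalTuple m (Fintype.card X),
      (MvPolynomial.C
          (∑ A ∈ univ.filter (fun A : Fin m → Finset X =>
              (∀ i, (A i).card = k i) ∧ ∀ i j, i ≠ j → Disjoint (A i) (A j)),
            ∑ σ ∈ univ.filter (fun σ : G => ∀ i, ∀ x ∈ A i, (σ : Equiv.Perm X) x ∈ A i), Δ σ))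
        * ∏ i, (MvPolynomial.X i : MvPolynomial (Fin m) F) ^ k i
      = ∑ A ∈ univ.filter (fun A : Fin m → Finset X =>
          (∀ i j, i ≠ j → Disjoint (A i) (A j)) ∧ ∑ i, (A i).card = Fintype.card X),
        MvPolynomial.C
          (∑ σ ∈ univ.filter (fun σ : G => ∀ i, ∀ x ∈ A i, (σ : Equiv.Perm X) x ∈ A i), Δ σ)
        * ∏ i, (MvPolynomial.X i : MvPolynomial (Fin m) F) ^ (A i).card := by
    rw [← sum_fiberwise_of_maps_to (t := Finset.Nat.antidiagonalTuple m (Fintype.card X))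
        (g := fun A : Fin m → Finset X => fun i => (A i).card)
        (fun A hA => Finset.Nat.mem_antidiagonalTuple.2 ((mem_filter.1 hA).2.2))]
    apply sum_congr rfl
    intro k hk
    have hksum : ∑ i, k i = Fintype.card X := Finset.Nat.mem_antidiagonalTuple.1 hk
    have hset : (univ.filter (fun A : Fin m → Finset X =>
          (∀ i, (A i).card = k i) ∧ ∀ i j, i ≠ j → Disjoint (A i) (A j)))
        = (univ.filter (fun A : Fin m → Finset X =>
            (∀ i j, i ≠ j → Disjoint (A i) (A j)) ∧ ∑ i, (A i).card = Fintype.card X)).filter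
          (fun A => (fun i => (A i).card) = k) := by
      rw [filter_filter]
      apply filter_congr
      intro A _
      constructor
      · rintro ⟨hcard, hdisj⟩
        refine ⟨⟨hdisj, ?_⟩, funext hcard⟩
        calc ∑ i, (A i).card = ∑ i, k i := by simp [hcard]
        _ = _ := hksum
      · rintro ⟨⟨hdisj, _⟩, hfk⟩
        exact ⟨fun i => congrFun hfk i, hdisj⟩
    rw [hset, map_sum, sum_mul]
    apply sum_congr rfl
    intro A hA
    have hAk : (fun i => (A i).card) = k := (mem_filter.1 hA).2
    congr 1
    apply prod_congr rfl
    intro i _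
    rw [← congrFun hAk i]
  rw [step1]
  have step2 : ∀ A : Fin m → Finset X,
      MvPolynomial.C
          (∑ σ ∈ univ.filter (fun σ : G => ∀ i, ∀ x ∈ A i, (σ : Equiv.Perm X) x ∈ A i), Δ σ)
        * ∏ i, (MvPolynomial.X i : MvPolynomial (Fin m) F) ^ (A i).card
      = ∑ σ : G, if (∀ i, ∀ x ∈ A i, (σ : Equiv.Perm X) x ∈ A i) then
          MvPolynomial.C (Δ σ) * ∏ i, (MvPolynomial.X i : MvPolynomial (Fin m) F) ^ (A i).card
        else 0 := by
    intro A
    rw [map_sum, sum_mul, sum_filter]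
  calc ∑ A ∈ univ.filter (fun A : Fin m → Finset X =>
          (∀ i j, i ≠ j → Disjoint (A i) (A j)) ∧ ∑ i, (A i).card = Fintype.card X),
        MvPolynomial.C
          (∑ σ ∈ univ.filter (fun σ : G => ∀ i, ∀ x ∈ A i, (σ : Equiv.Perm X) x ∈ A i), Δ σ)
        * ∏ i, (MvPolynomial.X i : MvPolynomial (Fin m) F) ^ (A i).card
      = ∑ A ∈ univ.filter (fun A : Fin m → Finset X =>
          (∀ i j, i ≠ j → Disjoint (A i) (A j)) ∧ ∑ i, (A i).card = Fintype.card X),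
        ∑ σ : G, if (∀ i, ∀ x ∈ A i, (σ : Equiv.Perm X) x ∈ A i) then
          MvPolynomial.C (Δ σ) * ∏ i, (MvPolynomial.X i : MvPolynomial (Fin m) F) ^ (A i).card
        else 0 := sum_congr rfl fun A _ => step2 A
    _ = ∑ σ : G, ∑ A ∈ univ.filter (fun A : Fin m → Finset X =>
          (∀ i j, i ≠ j → Disjoint (A i) (A j)) ∧ ∑ i, (A i).card = Fintype.card X),
        if (∀ i, ∀ x ∈ A i, (σ : Equiv.Perm X) x ∈ A i) then
          MvPolynomial.C (Δ σ) * ∏ i, (MvPolynomial.X i : MvPolynomial (Fin m) F) ^ (A i).card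
        else 0 := sum_comm
    _ = _ := by
        apply sum_congr rfl
        intro σ _
        rw [← sum_filter, filter_filter, ← mul_sum]
        congr 1
        exact PolyaAux.per_sigma (σ : Equiv.Perm X) m
          (fun i => (MvPolynomial.X i : MvPolynomial (Fin m) F))
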